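/- Let 𝒞 = (C, Q, 𝒯) be a counter system whose steps are exactly the disjunctive-guard steps induced by a finite set of disjunctive-guard transitions, and let 𝒞_α be its 01-counter system. Then Traces^ω(𝒞) = Traces^ω(𝒞_α): the set of infinite controller traces arising from infinite runs of 𝒞 equals the set of infinite controller traces arising from infinite runs of 𝒞_α, where the infinite trace of an infinite run is the ω-word over C obtained by projecting each configuration to its controller component and deleting every letter equal to its immediate predecessor, and only runs whose controller projection changes infinitely often contribute an infinite trace. -/
import Mathlib


namespace CS01

variable {C Q A : Type*}

/-- Configurations of a counter system: a controller state and a counter vector. -/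
abbrev Conf (C Q : Type*) := C × (Q → ℕ)

/-- The order `≼₀`: same controller state, pointwise smaller counters,
and the same zero pattern. -/
def Le0 (x y : Conf C Q) : Prop :=
  x.1 = y.1 ∧ (∀ q, x.2 q ≤ y.2 q) ∧ ∀ q, (x.2 q = 0 ↔ y.2 q = 0)

/-- The product order `≼₀ × ≼₀` on pairs of configurations. -/
def ProdLe0 (s t : Conf C Q × Conf C Q) : Prop :=
  Le0 s.1 t.1 ∧ Le0 s.2 t.2

/-- The abstraction `α`, mapping a configuration to its 01-abstraction. -/
def alpha (x : Conf C Q) : Conf C Q :=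
  (x.1, fun q => if x.2 q = 0 then 0 else 1)

/-- Forward `≼₀`-compatibility of a step relation. -/
def FwdCompat (T : Set (Conf C Q × Conf C Q)) : Prop :=
  ∀ x y d, (x, y) ∈ T → Le0 x d → ∃ d', (d, d') ∈ T ∧ Le0 y d'

/-- Backward `≼₀`-compatibility of a step relation. -/
def BwdCompat (T : Set (Conf C Q × Conf C Q)) : Prop :=
  ∀ x y d', (x, y) ∈ T → Le0 y d' → ∃ d, (d, d') ∈ T ∧ Le0 x d

/-- Steps of a counter system are size-preserving. -/
def SizePreserving [Fintype Q] (T : Set (Conf C Q × Conf C Q)) : Prop :=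
  ∀ t ∈ T, ∑ q, t.1.2 q = ∑ q, t.2.2 q

/-- A step of the 01-counter system `𝒞_α`. -/
def AbsStep (T : Set (Conf C Q × Conf C Q)) (x' y' : Conf C Q) : Prop :=
  ∃ t ∈ T, alpha t.1 = x' ∧ alpha t.2 = y'

/-- A finite run of the counter system, starting in an initial configuration. -/
def IsRun (T : Set (Conf C Q × Conf C Q)) (c0 : C) (Q0 : Set Q)
    {n : ℕ} (ρ : Fin (n + 1) → Conf C Q) : Prop :=
  (ρ 0).1 = c0 ∧ (∀ q ∉ Q0, (ρ 0).2 q = 0) ∧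
    ∀ i : Fin n, (ρ i.castSucc, ρ i.succ) ∈ T

/-- A finite run of the 01-counter system, starting in an initial (0/1-valued)
abstract configuration. -/
def IsAbsRun (T : Set (Conf C Q × Conf C Q)) (c0 : C) (Q0 : Set Q)
    {n : ℕ} (σ : Fin (n + 1) → Conf C Q) : Prop :=
  (σ 0).1 = c0 ∧ (∀ q, (σ 0).2 q ≤ 1) ∧ (∀ q ∉ Q0, (σ 0).2 q = 0) ∧
    ∀ i : Fin n, AbsStep T (σ i.castSucc) (σ i.succ)

/-- Reachability in the counter system. -/
def Reach (T : Set (Conf C Q × Conf C Q)) (c0 : C) (Q0 : Set Q)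
    (x : Conf C Q) : Prop :=
  ∃ (n : ℕ) (ρ : Fin (n + 1) → Conf C Q), IsRun T c0 Q0 ρ ∧ ρ (Fin.last n) = x

/-- Reachability in the 01-counter system. -/
def AbsReach (T : Set (Conf C Q × Conf C Q)) (c0 : C) (Q0 : Set Q)
    (x : Conf C Q) : Prop :=
  ∃ (n : ℕ) (σ : Fin (n + 1) → Conf C Q), IsAbsRun T c0 Q0 σ ∧ σ (Fin.last n) = x

/-- The counter vector obtained when `i` processes move from `p` to `p'`. -/
def moveN [DecidableEq Q] (v : Q → ℕ) (p p' : Q) (i : ℕ) : Q → ℕ :=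
  fun q => v q - (if q = p then i else 0) + (if q = p' then i else 0)

/-- A configuration satisfies a disjunctive guard `G ⊆ C ⊕ Q`. -/
def SatG (x : Conf C Q) (G : Set (C ⊕ Q)) : Prop :=
  Sum.inl x.1 ∈ G ∨ ∃ q, Sum.inr q ∈ G ∧ 1 ≤ x.2 q

/-- A disjunctive-guard step induced by controller transitions `ΔC` and user
transitions `ΔQ`: either the controller takes a guarded transition, or `i ≥ 1`
user processes take the same guarded transition; the guard must be satisfied
in the source and in the target configuration. -/
def DGStep [DecidableEq Q] (ΔC : Set (C × Set (C ⊕ Q) × C))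
    (ΔQ : Set (Q × Set (C ⊕ Q) × Q)) (x y : Conf C Q) : Prop :=
  (∃ G, (x.1, G, y.1) ∈ ΔC ∧ y.2 = x.2 ∧ SatG x G ∧ SatG y G) ∨
  (∃ p G p' i, 1 ≤ i ∧ (p, G, p') ∈ ΔQ ∧ y.1 = x.1 ∧ i ≤ x.2 p ∧
    y.2 = moveN x.2 p p' i ∧ SatG x G ∧ SatG y G)

/-- `t` is the destuttered infinite controller trace of the infinite run `ρ`:
there is a decomposition of `ℕ` into consecutive blocks, on the `n`-th of
which the controller component of `ρ` is constantly `t n`, with consecutive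
block values distinct.  (In particular only runs whose controller projection
changes infinitely often have an infinite trace.) -/
def IsInfTraceOf (ρ : ℕ → Conf C Q) (t : ℕ → C) : Prop :=
  ∃ φ : ℕ → ℕ, StrictMono φ ∧ φ 0 = 0 ∧
    (∀ n k, φ n ≤ k → k < φ (n + 1) → (ρ k).1 = t n) ∧
    ∀ n, t n ≠ t (n + 1)

/-- The infinite controller traces of the counter system. -/
def InfTraces (T : Set (Conf C Q × Conf C Q)) (c0 : C) (Q0 : Set Q) :
    Set (ℕ → C) :=
  {t | ∃ ρ : ℕ → Conf C Q, (ρ 0).1 = c0 ∧ (∀ q ∉ Q0, (ρ 0).2 q = 0) ∧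
    (∀ n, (ρ n, ρ (n + 1)) ∈ T) ∧ IsInfTraceOf ρ t}

/-- The infinite controller traces of the 01-counter system. -/
def AbsInfTraces (T : Set (Conf C Q × Conf C Q)) (c0 : C) (Q0 : Set Q) :
    Set (ℕ → C) :=
  {t | ∃ σ : ℕ → Conf C Q, (σ 0).1 = c0 ∧ (∀ q, (σ 0).2 q ≤ 1) ∧
    (∀ q ∉ Q0, (σ 0).2 q = 0) ∧
    (∀ n, AbsStep T (σ n) (σ (n + 1))) ∧ IsInfTraceOf σ t}

section Proof

variable [Fintype Q] [DecidableEq Q]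

/-- Support of a configuration as a finset. -/
def suppC (d : Conf C Q) : Finset Q := Finset.univ.filter (fun q => d.2 q ≠ 0)

lemma mem_suppC {d : Conf C Q} {q : Q} : q ∈ suppC d ↔ d.2 q ≠ 0 := by
  simp [suppC]

/-- The quantitative invariant: each supported state holds at least
`2 ^ (|Q| - |supp|)` processes. -/
def Inv (d : Conf C Q) : Prop :=
  ∀ q, d.2 q ≠ 0 → 2 ^ (Fintype.card Q - (suppC d).card) ≤ d.2 q

lemma satG_mono {x d : Conf C Q} {G : Set (C ⊕ Q)} (h1 : d.1 = x.1)
    (h2 : ∀ q, x.2 q ≠ 0 → d.2 q ≠ 0) (h : SatG x G) : SatG d G := by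
  rcases h with h | ⟨q, hq, hq1⟩
  · exact Or.inl (h1 ▸ h)
  · exact Or.inr ⟨q, hq, Nat.one_le_iff_ne_zero.mpr (h2 q (Nat.one_le_iff_ne_zero.mp hq1))⟩

lemma stepSim {ΔC : Set (C × Set (C ⊕ Q) × C)} {ΔQ : Set (Q × Set (C ⊕ Q) × Q)}
    {x y d : Conf C Q} (hxy : DGStep ΔC ΔQ x y)
    (h1 : d.1 = x.1) (h2 : ∀ q, x.2 q ≠ 0 → d.2 q ≠ 0) (hI : Inv d) :
    (y.1 = x.1 ∧ ∀ q, y.2 q ≠ 0 → d.2 q ≠ 0) ∨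
    ∃ d', DGStep ΔC ΔQ d d' ∧ d'.1 = y.1 ∧ (∀ q, y.2 q ≠ 0 → d'.2 q ≠ 0) ∧ Inv d' := by
  rcases hxy with ⟨G, hG, hv, hx, hy⟩ | ⟨p, G, p', i, hi1, hΔ, hy1, hip, hyv, hsx, hsy⟩
  · -- controller step: always perform it
    have hsupp : ∀ q, y.2 q ≠ 0 → ((y.1, d.2) : Conf C Q).2 q ≠ 0 := by
      intro q hq; exact h2 q (by rw [← hv]; exact hq)
    refine Or.inr ⟨(y.1, d.2), Or.inl ⟨G, by rw [h1]; exact hG, rfl,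
      satG_mono h1 h2 hx, satG_mono (x := y) (d := ((y.1, d.2) : Conf C Q)) rfl hsupp hy⟩, rfl, hsupp, ?_⟩
    intro q hq
    exact hI q hq
  · -- user step
    have hxp : x.2 p ≠ 0 := by omega
    have hdp : d.2 p ≠ 0 := h2 p hxp
    by_cases hp' : d.2 p' = 0
    · -- populating step: perform it
      have hpp' : p ≠ p' := by rintro rfl; exact hdp hp'
      have hp's : p' ∉ suppC d := by simp [suppC, hp']
      have hsK : (suppC d).card < Fintype.card Q := by
        have hne : suppC d ≠ Finset.univ := by
          intro h
          exact hp's (by rw [h]; exact Finset.mem_univ p')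
        have h := Finset.card_lt_card (Finset.ssubset_univ_iff.mpr hne)
        simpa [Finset.card_univ] using h
      have he : 1 ≤ Fintype.card Q - (suppC d).card := by omega
      have hpow : 2 ^ (Fintype.card Q - (suppC d).card)
          = 2 ^ (Fintype.card Q - (suppC d).card - 1) * 2 := by
        rw [← pow_succ]; congr 1; omega
      have hi'pos : 0 < 2 ^ (Fintype.card Q - (suppC d).card - 1) := pow_pos (by norm_num) _
      have hdpe : 2 ^ (Fintype.card Q - (suppC d).card) ≤ d.2 p := hI p hdp
      set i' := 2 ^ (Fintype.card Q - (suppC d).card - 1) with hi'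
      have hd'p : moveN d.2 p p' i' p = d.2 p - i' := by simp [moveN, hpp']
      have hd'p' : moveN d.2 p p' i' p' = i' := by
        simp [moveN, hp', (Ne.symm hpp' : p' ≠ p)]
      have hd'q : ∀ q, q ≠ p → q ≠ p' → moveN d.2 p p' i' q = d.2 q := by
        intro q hq hq'; simp [moveN, hq, hq']
      have hysupp : ∀ q, y.2 q ≠ 0 → moveN d.2 p p' i' q ≠ 0 := by
        intro q hq
        by_cases hqp' : q = p'
        · subst hqp'; rw [hd'p']; omega
        by_cases hqp : q = p
        · subst hqp; rw [hd'p]; omega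
        · rw [hd'q q hqp hqp']
          apply h2
          have hle : y.2 q = x.2 q := by rw [hyv]; simp [moveN, hqp, hqp']
          rw [← hle]; exact hq
      have hsuppC : suppC ((d.1, moveN d.2 p p' i') : Conf C Q) = insert p' (suppC d) := by
        ext q
        simp only [mem_suppC, Finset.mem_insert]
        show moveN d.2 p p' i' q ≠ 0 ↔ q = p' ∨ d.2 q ≠ 0
        by_cases hqp' : q = p'
        · subst hqp'; rw [hd'p']
          constructor
          · intro _; exact Or.inl rfl
          · intro _; omega
        by_cases hqp : q = p
        · subst hqp; rw [hd'p]
          constructor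
          · intro _; exact Or.inr hdp
          · intro _; omega
        · rw [hd'q q hqp hqp']
          constructor
          · intro h; exact Or.inr h
          · rintro (h | h); exact absurd h hqp'; exact h
      have hcard : (suppC ((d.1, moveN d.2 p p' i') : Conf C Q)).card = (suppC d).card + 1 := by
        rw [hsuppC, Finset.card_insert_of_notMem hp's]
      have hexp : Fintype.card Q - ((suppC ((d.1, moveN d.2 p p' i') : Conf C Q)).card)
          = Fintype.card Q - (suppC d).card - 1 := by
        rw [hcard]; omega
      have hInv' : Inv ((d.1, moveN d.2 p p' i') : Conf C Q) := by
        intro q hq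
        have hq2 : moveN d.2 p p' i' q ≠ 0 := hq
        show 2 ^ (Fintype.card Q
          - (suppC ((d.1, moveN d.2 p p' i') : Conf C Q)).card) ≤ moveN d.2 p p' i' q
        rw [hexp]
        by_cases hqp' : q = p'
        · subst hqp'; rw [hd'p']
        by_cases hqp : q = p
        · subst hqp; rw [hd'p]; omega
        · rw [hd'q q hqp hqp']
          rw [hd'q q hqp hqp'] at hq2
          have := hI q hq2
          omega
      refine Or.inr ⟨(d.1, moveN d.2 p p' i'),
        Or.inr ⟨p, G, p', i', by omega, hΔ, rfl, by omega, rfl,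
          satG_mono h1 h2 hsx, satG_mono (h1.trans hy1.symm) hysupp hsy⟩,
        h1.trans hy1.symm, hysupp, hInv'⟩
    · -- target already populated: skip
      refine Or.inl ⟨hy1, fun q hq => ?_⟩
      by_cases hqp' : q = p'
      · subst hqp'; exact hp'
      · have hle : y.2 q ≤ x.2 q := by
          rw [hyv]; simp only [moveN, if_neg hqp', add_zero]; exact Nat.sub_le _ _
        exact h2 q (by omega)

/-- Dependent recursion producing an infinite sequence with invariant. -/
lemma depRec {α : Type*} (P : ℕ → α → Prop) (R : ℕ → α → α → Prop) (a0 : α) (h0 : P 0 a0)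
    (hs : ∀ n a, P n a → ∃ b, P (n + 1) b ∧ R n a b) :
    ∃ D : ℕ → α, D 0 = a0 ∧ (∀ n, P n (D n)) ∧ ∀ n, R n (D n) (D (n + 1)) := by
  choose f hf1 hf2 using hs
  let DD : ∀ n : ℕ, {a : α // P n a} := fun n =>
    Nat.rec (motive := fun n => {a : α // P n a}) ⟨a0, h0⟩
      (fun n ih => ⟨f n ih.1 ih.2, hf1 n ih.1 ih.2⟩) n
  exact ⟨fun n => (DD n).1, rfl, fun n => (DD n).2, fun n => hf2 n (DD n).1 (DD n).2⟩

lemma le_self_of_strictMono {f : ℕ → ℕ} (hf : StrictMono f) : ∀ n, n ≤ f n := by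
  intro n
  induction n with
  | zero => exact Nat.zero_le _
  | succ n ih => exact Nat.succ_le_of_lt (lt_of_le_of_lt ih (hf (Nat.lt_succ_self n)))

lemma conc_to_abs {T : Set (Conf C Q × Conf C Q)} {c0 : C} {Q0 : Set Q} {t : ℕ → C}
    (ht : t ∈ InfTraces T c0 Q0) : t ∈ AbsInfTraces T c0 Q0 := by
  obtain ⟨ρ, h1, h2, h3, φ, hm, h0, hbl, hne⟩ := ht
  refine ⟨fun n => alpha (ρ n), h1, ?_, ?_, ?_, φ, hm, h0, ?_, hne⟩
  · intro q; by_cases h : (ρ 0).2 q = 0 <;> simp [alpha, h]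
  · intro q hq; simp [alpha, h2 q hq]
  · intro n; exact ⟨(ρ n, ρ (n + 1)), h3 n, rfl, rfl⟩
  · intro n k hk1 hk2; exact hbl n k hk1 hk2

lemma abs_to_conc {ΔC : Set (C × Set (C ⊕ Q) × C)} {ΔQ : Set (Q × Set (C ⊕ Q) × Q)}
    {T : Set (Conf C Q × Conf C Q)}
    (hT : ∀ x y : Conf C Q, (x, y) ∈ T ↔ DGStep ΔC ΔQ x y)
    {c0 : C} {Q0 : Set Q} {t : ℕ → C} (ht : t ∈ AbsInfTraces T c0 Q0) :
    t ∈ InfTraces T c0 Q0 := by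
  classical
  obtain ⟨σ, hσc, hσ01, hσQ, hσstep, φ, hφm, hφ0, hblk, htne⟩ := ht
  have alpha_ne : ∀ (x : Conf C Q) q, (alpha x).2 q ≠ 0 ↔ x.2 q ≠ 0 := by
    intro x q; by_cases h : x.2 q = 0 <;> simp [alpha, h]
  -- the invariant
  set P : ℕ → Conf C Q → Prop := fun n d =>
    d.1 = (σ n).1 ∧ (∀ q, (σ n).2 q ≠ 0 → d.2 q ≠ 0) ∧ Inv d with hPdef
  -- initial configuration
  set d0 : Conf C Q :=
    ((σ 0).1, fun q => if (σ 0).2 q = 0 then 0 else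
      2 ^ (Fintype.card Q - (suppC (σ 0)).card)) with hd0def
  have hd0supp : ∀ q, d0.2 q ≠ 0 ↔ (σ 0).2 q ≠ 0 := by
    intro q
    by_cases h : (σ 0).2 q = 0 <;> simp [hd0def, h, pow_ne_zero]
  have hsuppC0 : suppC d0 = suppC (σ 0) := by
    ext q
    simp only [mem_suppC]
    exact hd0supp q
  have hP0 : P 0 d0 := by
    refine ⟨rfl, fun q h => (hd0supp q).mpr h, ?_⟩
    intro q hq
    rw [hsuppC0]
    have h := (hd0supp q).mp hq
    simp [hd0def, h]
  have exGood : ∀ n d, P n d → ∃ d', P (n + 1) d' ∧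
      (((σ (n + 1)).1 = (σ n).1 ∧ d' = d) ∨ (d, d') ∈ T) := by
    intro n d hd
    obtain ⟨hd1, hd2, hdI⟩ := hd
    obtain ⟨w, hwT, hwx, hwy⟩ := hσstep n
    have hDG : DGStep ΔC ΔQ w.1 w.2 := (hT w.1 w.2).mp (by rwa [Prod.mk.eta])
    have hx1 : w.1.1 = (σ n).1 := by rw [← hwx]; rfl
    have hy1' : w.2.1 = (σ (n + 1)).1 := by rw [← hwy]; rfl
    have hxsupp : ∀ q, w.1.2 q ≠ 0 ↔ (σ n).2 q ≠ 0 := by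
      intro q; rw [← hwx]; exact (alpha_ne _ q).symm
    have hysupp : ∀ q, w.2.2 q ≠ 0 ↔ (σ (n + 1)).2 q ≠ 0 := by
      intro q; rw [← hwy]; exact (alpha_ne _ q).symm
    rcases stepSim hDG (by rw [hd1, ← hx1]) (fun q hq => hd2 q ((hxsupp q).mp hq)) hdI with
      ⟨hyx, hsk⟩ | ⟨d', hDG', hd'1, hys, hI'⟩
    · refine ⟨d, ⟨?_, fun q hq => hsk q ((hysupp q).mpr hq), hdI⟩, Or.inl ⟨?_, rfl⟩⟩
      · rw [hd1, ← hx1, ← hyx, hy1']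
      · rw [← hy1', hyx, hx1]
    · exact ⟨d', ⟨by rw [hd'1, hy1'], fun q hq => hys q ((hysupp q).mpr hq), hI'⟩,
        Or.inr ((hT d d').mpr hDG')⟩
  obtain ⟨D, hD0, hDP, hDR⟩ := depRec P
    (fun n d d' => ((σ (n + 1)).1 = (σ n).1 ∧ d' = d) ∨ (d, d') ∈ T) d0 hP0 exGood
  have hD1 : ∀ n, (D n).1 = (σ n).1 := fun n => (hDP n).1
  have hTk : ∀ n, (σ (n + 1)).1 ≠ (σ n).1 → (D n, D (n + 1)) ∈ T := by
    intro n h; rcases hDR n with ⟨h1, _⟩ | h1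
    · exact absurd h1 h
    · exact h1
  have hskip : ∀ n, (D n, D (n + 1)) ∉ T → D (n + 1) = D n := by
    intro n h; rcases hDR n with ⟨_, h1⟩ | h1
    · exact h1
    · exact absurd h1 h
  have hφle := le_self_of_strictMono hφm
  have hchg : ∀ n, ∃ m, n ≤ m ∧ (σ (m + 1)).1 ≠ (σ m).1 := by
    intro n
    have h12 : φ (n + 1) < φ (n + 2) := hφm (by omega)
    have h1le : n + 1 ≤ φ (n + 1) := hφle (n + 1)
    have hEq : φ (n + 1 + 1) = φ (n + 2) := rfl
    refine ⟨φ (n + 2) - 1, by omega, ?_⟩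
    have hb : φ (n + 2) - 1 + 1 = φ (n + 2) := by omega
    have hσ1 : (σ (φ (n + 2) - 1)).1 = t (n + 1) := hblk (n + 1) _ (by omega) (by omega)
    have hσ2 : (σ (φ (n + 2) - 1 + 1)).1 = t (n + 2) := by
      rw [hb]; exact hblk (n + 2) _ le_rfl (hφm (by omega))
    rw [hσ1, hσ2]
    exact (htne (n + 1)).symm
  have exTaken : ∀ n, ∃ m, n ≤ m ∧ (D m, D (m + 1)) ∈ T := by
    intro n; obtain ⟨m, hm1, hm2⟩ := hchg n; exact ⟨m, hm1, hTk m hm2⟩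
  set next : ℕ → ℕ := fun n => Nat.find (exTaken n) with hnextdef
  have hnext_le : ∀ n, n ≤ next n := fun n => (Nat.find_spec (exTaken n)).1
  have hnext_T : ∀ n, (D (next n), D (next n + 1)) ∈ T := fun n => (Nat.find_spec (exTaken n)).2
  have hnext_min : ∀ n j, n ≤ j → j < next n → (D j, D (j + 1)) ∉ T := by
    intro n j hj1 hj2 hj
    exact Nat.find_min (exTaken n) hj2 ⟨hj1, hj⟩
  have hnext_min' : ∀ n m, n ≤ m → (D m, D (m + 1)) ∈ T → next n ≤ m := by
    intro n m hm1 hm2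
    exact Nat.find_min' (exTaken n) ⟨hm1, hm2⟩
  set g : ℕ → ℕ := fun k =>
    Nat.rec (motive := fun _ => ℕ) 0 (fun _ ih => next ih + 1) k with hgdef
  have hg0 : g 0 = 0 := rfl
  have hgs : ∀ k, g (k + 1) = next (g k) + 1 := fun k => rfl
  have hgm : StrictMono g := strictMono_nat_of_lt_succ (fun k => by
    rw [hgs]; have := hnext_le (g k); omega)
  have hDconst : ∀ a d, (∀ j, a ≤ j → j < a + d → (D j, D (j + 1)) ∉ T) → D (a + d) = D a := by
    intro a d
    induction d with
    | zero => intro _; rfl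
    | succ d ih =>
      intro h
      have h2 : D (a + d + 1) = D (a + d) := hskip (a + d) (h (a + d) (by omega) (by omega))
      have h3 : D (a + (d + 1)) = D (a + d) := h2
      rw [h3]
      exact ih (fun j hj1 hj2 => h j hj1 (by omega))
  have hρstep : ∀ k, (D (g k), D (g (k + 1))) ∈ T := by
    intro k
    have hle := hnext_le (g k)
    have h1 : D (g k + (next (g k) - g k)) = D (g k) :=
      hDconst (g k) _ (fun j hj1 hj2 => hnext_min (g k) j hj1 (by omega))
    have h2 : g k + (next (g k) - g k) = next (g k) := by omega
    have h3 : D (next (g k)) = D (g k) := by rw [← h2]; exact h1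
    rw [hgs, ← h3]
    exact hnext_T (g k)
  have hgle := le_self_of_strictMono hgm
  have exψ : ∀ M, ∃ k, φ M ≤ g k := fun M => ⟨φ M, hgle (φ M)⟩
  set ψ : ℕ → ℕ := fun M => Nat.find (exψ M) with hψdef
  have hψ_spec : ∀ M, φ M ≤ g (ψ M) := fun M => Nat.find_spec (exψ M)
  have hψ_min : ∀ M k, k < ψ M → g k < φ M := by
    intro M k h
    have := Nat.find_min (exψ M) h
    omega
  have hφpos : ∀ M, 0 < φ (M + 1) := by
    intro M
    have h0 : φ 0 < φ (M + 1) := hφm (by omega)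
    omega
  have hA : ∀ M k, g k < φ (M + 1) → g (k + 1) ≤ φ (M + 1) := by
    intro M k h
    have hp := hφpos M
    have hMM : φ M < φ (M + 1) := hφm (by omega)
    have hb : φ (M + 1) - 1 + 1 = φ (M + 1) := by omega
    have hσ1 : (σ (φ (M + 1) - 1)).1 = t M := hblk M _ (by omega) (by omega)
    have hσ2 : (σ (φ (M + 1) - 1 + 1)).1 = t (M + 1) := by
      rw [hb]; exact hblk (M + 1) _ le_rfl (hφm (by omega))
    have hTb : (D (φ (M + 1) - 1), D (φ (M + 1) - 1 + 1)) ∈ T := by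
      apply hTk
      rw [hσ1, hσ2]
      exact (htne M).symm
    have hnle : next (g k) ≤ φ (M + 1) - 1 := hnext_min' (g k) _ (by omega) hTb
    rw [hgs]
    omega
  have hlt : ∀ M, g (ψ M) < φ (M + 1) := by
    intro M
    have hp := hφpos M
    by_cases h0 : ψ M = 0
    · rw [h0, hg0]; exact hp
    · have hk : g (ψ M - 1) < φ M := hψ_min M _ (by omega)
      by_cases hM0 : M = 0
      · subst hM0; rw [hφ0] at hk; omega
      · have hA' := hA (M - 1) (ψ M - 1)
          (by rw [show M - 1 + 1 = M by omega]; exact hk)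
        rw [show M - 1 + 1 = M by omega, show ψ M - 1 + 1 = ψ M by omega] at hA'
        have h3 : φ M < φ (M + 1) := hφm (by omega)
        omega
  have hψm : StrictMono ψ := strictMono_nat_of_lt_succ (by
    intro M
    by_contra h
    push_neg at h
    have h1 := hψ_spec (M + 1)
    have h2 : g (ψ (M + 1)) ≤ g (ψ M) := hgm.monotone h
    have h3 := hlt M
    omega)
  have hψ0 : ψ 0 = 0 := by
    have : ψ 0 ≤ 0 := Nat.find_le (by rw [hφ0, hg0])
    omega
  have hρblk : ∀ M k, ψ M ≤ k → k < ψ (M + 1) → (D (g k)).1 = t M := by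
    intro M k h1 h2
    have ha : φ M ≤ g k := le_trans (hψ_spec M) (hgm.monotone h1)
    have hb : g k < φ (M + 1) := hψ_min (M + 1) k h2
    rw [hD1 (g k)]
    exact hblk M (g k) ha hb
  refine ⟨fun k => D (g k), ?_, ?_, hρstep, ψ, hψm, hψ0, hρblk, htne⟩
  · show (D (g 0)).1 = c0
    rw [hg0, hD0, hd0def]
    exact hσc
  · intro q hq
    show (D (g 0)).2 q = 0
    rw [hg0, hD0, hd0def]
    simp [hσQ q hq]

end Proof

/-- For a counter system whose steps are exactly the
disjunctive-guard steps induced by a finite set of disjunctive-guard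
transitions, the set of infinite controller traces equals that of its
01-counter system. -/
theorem stmt15 [Fintype C] [Fintype Q] [Nonempty C] [Nonempty Q] [DecidableEq Q]
    (ΔC : Set (C × Set (C ⊕ Q) × C)) (ΔQ : Set (Q × Set (C ⊕ Q) × Q))
    (T : Set (Conf C Q × Conf C Q))
    (hT : ∀ x y : Conf C Q, (x, y) ∈ T ↔ DGStep ΔC ΔQ x y)
    (c0 : C) (Q0 : Set Q) :
    InfTraces T c0 Q0 = AbsInfTraces T c0 Q0 := by
  ext t
  constructor
  · exact conc_to_abs
  · exact abs_to_conc hT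

end CS01
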